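/- Let D = −δ + d act on W-valued forms on ℝ^{2n}, with the Moyal–Weyl product taken with respect to the standard Poisson matrix. (i) For every a ∈ C^∞(ℝ^{2n},ℂ)[[ℏ]] there is a unique W-valued 0-form ã with Dã = 0 and ã(x,0) = a(x), namely the fiberwise Taylor series ã(x,y) = Σ_α (1/α!)(∂^α_x a)(x) y^α. (ii) If ã, b̃ are the flat sections with ã(x,0) = a and b̃(x,0) = b, then the fiberwise product ã⋆b̃ is again flat and (ã⋆b̃)(x,0) = a⋆b, the Moyal star-product of a and b. Hence σ(u) = u|_{y=0} is a ℂ[[ℏ]]-algebra isomorphism from the algebra of D-flat sections onto the Moyal star-product algebra C^∞(ℝ^{2n},ℂ)[[ℏ]]. -/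

import Mathlib

/-!  Common definitions: formal Weyl algebras, Moyal products, Weyl-bundle valued
differential forms on ℝ^{2n}, Fedosov connections, star-products on smooth functions,
multidifferential operators and Hochschild coboundaries.  -/

noncomputable section
namespace StarPaper

open scoped BigOperators

/-! ### Formal power series in y -/

/-- The fiber coefficient ring `ℂ[[y^1, …, y^N]]`. -/
abbrev Wc (N : ℕ) := MvPowerSeries (Fin N) ℂ

/-- Build a formal power series from its coefficient function. -/
def Wc.mk {N : ℕ} (f : (Fin N →₀ ℕ) → ℂ) : Wc N := f

/-- Formal partial derivative `∂/∂y^i` on `ℂ[[y]]`. -/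
def yD {N : ℕ} (i : Fin N) (a : Wc N) : Wc N :=
  Wc.mk fun β => ((β i : ℂ) + 1) * MvPowerSeries.coeff (β + Finsupp.single i 1) a

/-- Formal iterated partial derivative `∂^α` on `ℂ[[y]]`. -/
def yDM {N : ℕ} (α : Fin N →₀ ℕ) (a : Wc N) : Wc N :=
  Wc.mk fun β =>
    (∏ i : Fin N, (((β i + α i).factorial : ℂ) / ((β i).factorial : ℂ))) *
      MvPowerSeries.coeff (β + α) a

/-- Iterated derivatives along a tuple of directions. -/
def iterD {R : Type*} {N : ℕ} (D : Fin N → R → R) : {k : ℕ} → (Fin k → Fin N) → R → R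
  | 0, _, a => a
  | _ + 1, v, a => D (v 0) (iterD D (fun t => v t.succ) a)

/-- The `k`-th term of the Moyal–Weyl product for a constant matrix `π`:
`((-iℏ/2)^k/k!) Σ π^{i₁j₁}⋯π^{i_kj_k} (∂^k a/∂y^{i₁}⋯) (∂^k b/∂y^{j₁}⋯)`. -/
def moyalTerm {R : Type*} [CommRing R] [Module ℂ R] {N : ℕ}
    (D : Fin N → R → R) (π : Matrix (Fin N) (Fin N) ℂ) (k : ℕ) (a b : R) : R :=
  ((-Complex.I / 2) ^ k / (Nat.factorial k : ℂ)) •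
    ∑ i : Fin k → Fin N, ∑ j : Fin k → Fin N,
      (∏ t, π (i t) (j t)) • (iterD D i a * iterD D j b)

/-- Moyal product on formal power series `Σ_m ℏ^m F_m` (coefficients `F : ℕ → R`). -/
def moyalN {R : Type*} [CommRing R] [Module ℂ R] {N : ℕ} (D : Fin N → R → R)
    (π : Matrix (Fin N) (Fin N) ℂ) (F G : ℕ → R) : ℕ → R :=
  fun m => ∑ k ∈ Finset.range (m + 1), ∑ l ∈ Finset.range (m - k + 1),
    moyalTerm D π k (F l) (G (m - k - l))

/-- Moyal product on formal Laurent series `Σ_m ℏ^m F_m` (coefficients `F : ℤ → R`);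
the sum over contributions is finite for series bounded below in `ℏ`-degree. -/
def moyalZ {R : Type*} [CommRing R] [Module ℂ R] {N : ℕ} (D : Fin N → R → R)
    (π : Matrix (Fin N) (Fin N) ℂ) (F G : ℤ → R) : ℤ → R :=
  fun m => ∑ᶠ p : ℕ × ℤ, moyalTerm D π p.1 (F p.2) (G (m - p.1 - p.2))

/-- Moyal term for an `ℏ`-dependent matrix `π(ℏ) = π₀ + ℏπ₁`: the part of the `k`-th
Moyal term in which the product of matrix entries contributes `ℏ^d`. -/
def moyalTermH {R : Type*} [CommRing R] [Module ℂ R] {N : ℕ} (D : Fin N → R → R)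
    (π0 π1 : Matrix (Fin N) (Fin N) ℂ) (k d : ℕ) (a b : R) : R :=
  ((-Complex.I / 2) ^ k / (Nat.factorial k : ℂ)) •
    ∑ i : Fin k → Fin N, ∑ j : Fin k → Fin N,
      (∑ T ∈ Finset.univ.powerset.filter (fun T : Finset (Fin k) => T.card = d),
          (∏ t ∈ T, π1 (i t) (j t)) * ∏ t ∈ Tᶜ, π0 (i t) (j t)) •
        (iterD D i a * iterD D j b)

/-- Moyal product built from the `ℏ`-dependent matrix `π(ℏ) = π₀ + ℏπ₁`. -/
def moyalNH {R : Type*} [CommRing R] [Module ℂ R] {N : ℕ} (D : Fin N → R → R)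
    (π0 π1 : Matrix (Fin N) (Fin N) ℂ) (F G : ℕ → R) : ℕ → R :=
  fun m => ∑ k ∈ Finset.range (m + 1), ∑ d ∈ Finset.range (m - k + 1),
    ∑ l ∈ Finset.range (m - k - d + 1),
      moyalTermH D π0 π1 k d (F l) (G (m - k - d - l))

/-- The standard Poisson matrix `π` on `ℝ^{2n}` (inverse of the standard symplectic
matrix `ω`, normalized by `Σ_m ω_{jm} π^{mn} = δ_j^n`). -/
def stdPi (n : ℕ) : Matrix (Fin (2 * n)) (Fin (2 * n)) ℂ :=
  Matrix.of fun i j =>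
    if (i : ℕ) + n = (j : ℕ) then 1 else if (j : ℕ) + n = (i : ℕ) then -1 else 0

/-- The standard symplectic matrix `ω_{ij}`. -/
def stdOmega (n : ℕ) : Matrix (Fin (2 * n)) (Fin (2 * n)) ℂ := -stdPi n

/-! ### The formal Weyl algebra `W = ℂ[[y,ℏ]]` -/

/-- The formal Weyl algebra as `ℏ`-coefficient sequences. -/
abbrev Wa (N : ℕ) := ℕ → Wc N

/-- Moyal–Weyl product on `W` for a constant matrix `π`. -/
def wmulPi {N : ℕ} (π : Matrix (Fin N) (Fin N) ℂ) (a b : Wa N) : Wa N := moyalN yD π a b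

/-- Moyal–Weyl product on `W` for the standard symplectic Poisson matrix. -/
def wmul {n : ℕ} (a b : Wa (2 * n)) : Wa (2 * n) := wmulPi (stdPi n) a b

/-- The unit `1 ∈ W`. -/
def oneW (N : ℕ) : Wa N := fun m => if m = 0 then 1 else 0

/-- Scalar multiplication by a formal power series `s ∈ ℂ[[ℏ]]` (given by its
coefficients `s : ℕ → ℂ`). -/
def hsmul {N : ℕ} (s : ℕ → ℂ) (a : Wa N) : Wa N :=
  fun m => ∑ l ∈ Finset.range (m + 1), s l • a (m - l)

/-- The operator `E = -(i/2) Σ_j y^j ∂/∂y^j` on `ℂ[[y]]`. -/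
def EulW {N : ℕ} (a : Wc N) : Wc N :=
  Wc.mk fun β => -Complex.I / 2 * (∑ i : Fin N, (β i : ℂ)) * MvPowerSeries.coeff β a

/-- `E` on the Weyl algebra, acting on each `ℏ`-coefficient. -/
def EulWa {N : ℕ} (a : Wa N) : Wa N := fun m => EulW (a m)

/-- Termwise derivative `∂/∂ℏ`. -/
def hD {N : ℕ} (a : Wa N) : Wa N := fun m => (((m + 1 : ℕ) : ℂ)) • a (m + 1)

/-- Multiplication by `ℏ`. -/
def hM {N : ℕ} (a : Wa N) : Wa N := fun m => match m with
  | 0 => 0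
  | Nat.succ m' => a m'

/-- Division by `ℏ` (exact on elements divisible by `ℏ`; discards the constant term). -/
def hInv {N : ℕ} (a : Wa N) : Wa N := fun m => a (m + 1)

/-- The `ℏ`-derivative of the Moyal–Weyl product structure:
`c₁(a,b) = ∂(a⋆b)/∂ℏ − (∂a/∂ℏ)⋆b − a⋆(∂b/∂ℏ)`. -/
def c1W {n : ℕ} (a b : Wa (2 * n)) : Wa (2 * n) :=
  hD (wmul a b) - wmul (hD a) b - wmul a (hD b)

/-! ### W-valued differential forms on ℝ^{2n} -/

/-- Points of `ℝ^{2n}`. -/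
abbrev Pt (n : ℕ) := Fin (2 * n) → ℝ

/-- `W`-valued exterior forms on `ℝ^{2n}`: the component at a finite index set
`S = {j₁ < ⋯ < j_q}` is the coefficient of `dx^{j₁} ∧ ⋯ ∧ dx^{j_q}`. -/
abbrev WF (n : ℕ) := Finset (Fin (2 * n)) → Pt n → Wa (2 * n)

/-- Sign `(-1)^{#{j ∈ S, j < i}}` for inserting `dx^i` in front of `dx^S`. -/
def insSign {N : ℕ} (S : Finset (Fin N)) (i : Fin N) : ℂ :=
  (-1) ^ (S.filter fun j => j < i).card

/-- Koszul sign for merging `dx^{S₁} ∧ dx^{S₂}` into increasing order. -/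
def shuffleSign {N : ℕ} (S1 S2 : Finset (Fin N)) : ℂ :=
  (-1) ^ ((S1 ×ˢ S2).filter fun p => p.2 < p.1).card

/-- `∂/∂y^i` on the Weyl algebra. -/
def yDa {N : ℕ} (i : Fin N) (w : Wa N) : Wa N := fun m => yD i (w m)

/-- The operator `δ a = Σ_i dx^i ∧ ∂a/∂y^i`. -/
def deltaW {n : ℕ} (a : WF n) : WF n :=
  fun S x => ∑ i ∈ S, insSign S i • yDa i (a (S.erase i) x)

/-- The partial derivative `∂/∂x^i` of a `W`-valued function, taken coefficientwise. -/
def xD {n : ℕ} (i : Fin (2 * n)) (f : Pt n → Wa (2 * n)) (x : Pt n) : Wa (2 * n) :=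
  fun m => Wc.mk fun β =>
    fderiv ℝ (fun x' => MvPowerSeries.coeff β (f x' m)) x (Pi.single i 1)

/-- The exterior derivative `d a = Σ_i dx^i ∧ ∂a/∂x^i` on `W`-valued forms. -/
def extD {n : ℕ} (a : WF n) : WF n :=
  fun S x => ∑ i ∈ S, insSign S i • xD i (a (S.erase i)) x

/-- The product on `W`-valued forms: Moyal–Weyl product combined with wedge product. -/
def wMulF {n : ℕ} (a b : WF n) : WF n :=
  fun S x => ∑ S1 ∈ S.powerset, shuffleSign S1 (S \ S1) • wmul (a S1 x) (b (S \ S1) x)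

/-- Graded commutator `[r, a] = r⋆a − (−1)^{|a|} a⋆r` with a form `r` of degree 1. -/
def comm1 {n : ℕ} (r a : WF n) : WF n :=
  fun S x => wMulF r a S x - (-1 : ℂ) ^ (S.card - 1) • wMulF a r S x

/-- Graded commutator `[u, a] = u⋆a − a⋆u` with a form `u` of even degree. -/
def commE {n : ℕ} (u a : WF n) : WF n := fun S x => wMulF u a S x - wMulF a u S x

/-- The connection `D = −δ + d + (i/ℏ)[r, ·]` determined by a `W`-valued 1-form `r`. -/
def fedD {n : ℕ} (r a : WF n) : WF n :=
  fun S x => -deltaW a S x + extD a S x + Complex.I • hInv (comm1 r a S x)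

/-- A `W`-valued form has smooth coefficients. -/
def WF.Smooth {n : ℕ} (a : WF n) : Prop :=
  ∀ S m β, ContDiff ℝ (⊤ : ℕ∞) fun x => MvPowerSeries.coeff β (a S x m)

/-- A `W`-valued form is homogeneous of form-degree `q`. -/
def isForm {n : ℕ} (q : ℕ) (a : WF n) : Prop := ∀ S, S.card ≠ q → a S = 0

/-- A `W`-valued form is scalar: all coefficients are independent of the `y` variables. -/
def isScalar {n : ℕ} (a : WF n) : Prop :=
  ∀ S x m β, β ≠ 0 → MvPowerSeries.coeff β (a S x m) = 0

/-- The constant standard symplectic 2-form `ω = (1/2) Σ ω_{ij} dx^i ∧ dx^j`. -/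
def omegaF (n : ℕ) : WF n :=
  fun S _ m =>
    if m = 0 then
      (MvPowerSeries.C : ℂ →+* MvPowerSeries (Fin (2 * n)) ℂ)
        (∑ i : Fin (2 * n), ∑ j : Fin (2 * n),
          if i < j ∧ S = {i, j} then stdOmega n i j else 0)
    else 0

/-- The curvature `Ω = ω + δr − dr − (i/ℏ) r⋆r` of the connection `−δ + d + (i/ℏ)[r,·]`. -/
def curv {n : ℕ} (r : WF n) : WF n :=
  fun S x => omegaF n S x + deltaW r S x - extD r S x - Complex.I • hInv (wMulF r r S x)

/-- The operator `δ⁻¹`, acting as `(1/(p+q)) Σ_k y^k ι_k` on the part of `y`-degree `p`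
and form-degree `q` (and as `0` for `p = q = 0`). -/
def deltaInv {n : ℕ} (a : WF n) : WF n :=
  fun S x m => Wc.mk fun β =>
    ((((β.sum fun _ e => e) + S.card : ℕ) : ℂ))⁻¹ *
      ∑ k : Fin (2 * n),
        if k ∉ S ∧ 1 ≤ β k then
          insSign S k * MvPowerSeries.coeff (β - Finsupp.single k 1) (a (insert k S) x m)
        else 0

/-! ### x-independent W-valued exterior forms (the graded algebra W⊗Λ) -/

/-- `W`-valued exterior forms with constant coefficients. -/
abbrev WL (n : ℕ) := Finset (Fin (2 * n)) → Wa (2 * n)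

/-- `δ` on `W ⊗ Λ`. -/
def deltaWL {n : ℕ} (a : WL n) : WL n :=
  fun S => ∑ i ∈ S, insSign S i • yDa i (a (S.erase i))

/-- Product (Moyal combined with wedge) on `W ⊗ Λ`. -/
def wMulL {n : ℕ} (a b : WL n) : WL n :=
  fun S => ∑ S1 ∈ S.powerset, shuffleSign S1 (S \ S1) • wmul (a S1) (b (S \ S1))

/-- `E` on `W ⊗ Λ`, acting on the `W`-coefficients. -/
def EulL {n : ℕ} (a : WL n) : WL n := fun S => EulWa (a S)

/-- The `W`-valued 1-form `Σ_{i,j} ω_{ij} y^i dx^j`. -/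
def oydxW (n : ℕ) : WL n :=
  fun S m =>
    if m = 0 then
      ∑ j : Fin (2 * n),
        (if S = {j} then ∑ i : Fin (2 * n), stdOmega n i j • MvPowerSeries.X i else 0)
    else 0

/-- The 1-form `K₀ = −(Er − iℏ ∂r/∂ℏ + i r + (i/2) Σ ω_{ij} y^i dx^j)`. -/
def K0 {n : ℕ} (r : WF n) : WF n :=
  fun S x =>
    -(EulWa (r S x) - Complex.I • hM (hD (r S x)) + Complex.I • r S x
      + (Complex.I / 2) • oydxW n S)

/-- The quantum Liouville-type operator `ρ(u) = (ℏ/i) ∂u/∂ℏ + E u`. -/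
def rhoW {n : ℕ} (u : WF n) : WF n :=
  fun S x m => (-Complex.I * (m : ℂ)) • u S x m + EulW (u S x m)

/-- `c₁` extended to `W`-valued forms. -/
def c1F {n : ℕ} (a b : WF n) : WF n :=
  fun S x => ∑ S1 ∈ S.powerset, shuffleSign S1 (S \ S1) • c1W (a S1 x) (b (S \ S1) x)

/-! ### The Laurent (ℏ-inverted) Weyl algebra and forms -/

/-- The extended Weyl algebra `W⁺ = ℂ[[y]][ℏ⁻¹,ℏ]]` as `ℏ`-coefficient sequences. -/
abbrev WaZ (N : ℕ) := ℤ → Wc N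

/-- Moyal–Weyl product on `W⁺` for a constant matrix `π`. -/
def wmulZPi {N : ℕ} (π : Matrix (Fin N) (Fin N) ℂ) (a b : WaZ N) : WaZ N := moyalZ yD π a b

/-- Moyal–Weyl product on `W⁺` for the standard symplectic Poisson matrix. -/
def wmulZ {n : ℕ} (a b : WaZ (2 * n)) : WaZ (2 * n) := wmulZPi (stdPi n) a b

/-- `W⁺`-valued exterior forms on `ℝ^{2n}`. -/
abbrev WFZ (n : ℕ) := Finset (Fin (2 * n)) → Pt n → WaZ (2 * n)

/-- `∂/∂y^i` on `W⁺`. -/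
def yDaZ {N : ℕ} (i : Fin N) (w : WaZ N) : WaZ N := fun m => yD i (w m)

/-- `δ` on `W⁺`-valued forms. -/
def deltaZ {n : ℕ} (a : WFZ n) : WFZ n :=
  fun S x => ∑ i ∈ S, insSign S i • yDaZ i (a (S.erase i) x)

/-- `∂/∂x^i` on `W⁺`-valued functions. -/
def xDZ {n : ℕ} (i : Fin (2 * n)) (f : Pt n → WaZ (2 * n)) (x : Pt n) : WaZ (2 * n) :=
  fun m => Wc.mk fun β =>
    fderiv ℝ (fun x' => MvPowerSeries.coeff β (f x' m)) x (Pi.single i 1)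

/-- Exterior derivative on `W⁺`-valued forms. -/
def extDZ {n : ℕ} (a : WFZ n) : WFZ n :=
  fun S x => ∑ i ∈ S, insSign S i • xDZ i (a (S.erase i)) x

/-- Product on `W⁺`-valued forms. -/
def wMulZF {n : ℕ} (a b : WFZ n) : WFZ n :=
  fun S x => ∑ S1 ∈ S.powerset, shuffleSign S1 (S \ S1) • wmulZ (a S1 x) (b (S \ S1) x)

/-- Graded commutator with a 1-form, on `W⁺`-valued forms. -/
def comm1Z {n : ℕ} (r a : WFZ n) : WFZ n :=
  fun S x => wMulZF r a S x - (-1 : ℂ) ^ (S.card - 1) • wMulZF a r S x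

/-- Division by `ℏ` on `W⁺` (exact: a shift of Laurent coefficients). -/
def shiftZ {N : ℕ} (a : WaZ N) : WaZ N := fun m => a (m + 1)

/-- The connection `D = −δ + d + (i/ℏ)[r,·]` on `W⁺`-valued forms. -/
def fedDZ {n : ℕ} (r a : WFZ n) : WFZ n :=
  fun S x => -deltaZ a S x + extDZ a S x + Complex.I • shiftZ (comm1Z r a S x)

/-- Termwise `∂/∂ℏ` on `W⁺`. -/
def hDZ {N : ℕ} (a : WaZ N) : WaZ N := fun m => ((m + 1 : ℤ) : ℂ) • a (m + 1)

/-- `∂/∂ℏ` on `W⁺`-valued forms. -/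
def hDZF {n : ℕ} (a : WFZ n) : WFZ n := fun S x => hDZ (a S x)

/-- `E` on `W⁺`. -/
def EulZ {N : ℕ} (a : WaZ N) : WaZ N := fun m => EulW (a m)

/-- `E` on `W⁺`-valued forms. -/
def EulZF {n : ℕ} (a : WFZ n) : WFZ n := fun S x => EulZ (a S x)

/-- `c₁` on `W⁺`. -/
def c1Za {n : ℕ} (a b : WaZ (2 * n)) : WaZ (2 * n) :=
  hDZ (wmulZ a b) - wmulZ (hDZ a) b - wmulZ a (hDZ b)

/-- `c₁` on `W⁺`-valued forms. -/
def c1ZF {n : ℕ} (a b : WFZ n) : WFZ n :=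
  fun S x => ∑ S1 ∈ S.powerset, shuffleSign S1 (S \ S1) • c1Za (a S1 x) (b (S \ S1) x)

/-- Smoothness of the coefficients of a `W⁺`-valued form. -/
def WFZ.Smooth {n : ℕ} (a : WFZ n) : Prop :=
  ∀ S m β, ContDiff ℝ (⊤ : ℕ∞) fun x => MvPowerSeries.coeff β (a S x m)

/-- Homogeneity of form-degree `q` for `W⁺`-valued forms. -/
def isFormZ {n : ℕ} (q : ℕ) (a : WFZ n) : Prop := ∀ S, S.card ≠ q → a S = 0

/-- A `W⁺`-valued form has power series coefficients (no negative powers of `ℏ`). -/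
def PSupp {n : ℕ} (a : WFZ n) : Prop := ∀ S x m, m < 0 → a S x m = 0

/-- A Laurent series is bounded below in `ℏ`-degree. -/
def BddZ {α : Type*} [Zero α] (f : ℤ → α) : Prop :=
  ∃ N : ℕ, ∀ m : ℤ, m < -(N : ℤ) → f m = 0

/-! ### Smooth functions and star-products on ℝ^N -/

/-- Complex-valued functions on `ℝ^N`. -/
abbrev SmFn (N : ℕ) := (Fin N → ℝ) → ℂ

/-- Partial derivative `∂/∂x^i` of a (smooth) function. -/
def xDf {N : ℕ} (i : Fin N) (f : SmFn N) : SmFn N := fun x => fderiv ℝ f x (Pi.single i 1)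

/-- Iterated partial derivative `∂^α`. -/
def xDfM {N : ℕ} (α : Fin N →₀ ℕ) (f : SmFn N) : SmFn N :=
  (List.finRange N).foldr (fun i g => (xDf i)^[α i] g) f

/-- Formal power series with function coefficients: `C^∞(ℝ^N,ℂ)[[ℏ]]`. -/
abbrev SmSer (N : ℕ) := ℕ → SmFn N

/-- Formal Laurent series with function coefficients: `C^∞(ℝ^N,ℂ)[ℏ⁻¹,ℏ]]`. -/
abbrev SmLau (N : ℕ) := ℤ → SmFn N

/-- All coefficients of a series are smooth. -/
def SmSer.Smooth {N : ℕ} (F : SmSer N) : Prop := ∀ m, ContDiff ℝ (⊤ : ℕ∞) (F m)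

/-- All coefficients of a Laurent series are smooth. -/
def SmLau.Smooth {N : ℕ} (F : SmLau N) : Prop := ∀ m, ContDiff ℝ (⊤ : ℕ∞) (F m)

/-- The Moyal star-product on `C^∞(ℝ^N,ℂ)[[ℏ]]` for a constant matrix `π`. -/
def fMul {N : ℕ} (π : Matrix (Fin N) (Fin N) ℂ) (F G : SmSer N) : SmSer N :=
  moyalN xDf π F G

/-- The Moyal star-product on Laurent series. -/
def fMulZ {N : ℕ} (π : Matrix (Fin N) (Fin N) ℂ) (F G : SmLau N) : SmLau N :=
  moyalZ xDf π F G

/-- The Moyal star-product with `ℏ`-dependent matrix `π(ℏ) = π₀ + ℏπ₁`. -/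
def fMulH {N : ℕ} (π0 π1 : Matrix (Fin N) (Fin N) ℂ) (F G : SmSer N) : SmSer N :=
  moyalNH xDf π0 π1 F G

/-- The constant series `1`. -/
def oneSer (N : ℕ) : SmSer N := fun m => if m = 0 then (fun _ => 1) else 0

/-- The standard Poisson bracket `{f,g} = Σ π^{ij} ∂_i f ∂_j g` on `ℝ^{2n}`. -/
def pb (n : ℕ) (f g : SmFn (2 * n)) : SmFn (2 * n) :=
  fun x => ∑ i, ∑ j, stdPi n i j * xDf i f x * xDf j g x

/-! ### Multidifferential operators and star-products -/

/-- A `k`-multidifferential operator on `C^∞(ℝ^N,ℂ)`: a finite sum of terms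
`u(x) (∂^{α₁}f₁)⋯(∂^{α_k}f_k)`, recorded by its finitely many coefficients. -/
abbrev MDOp (N k : ℕ) := (Fin k → (Fin N →₀ ℕ)) →₀ SmFn N

/-- Action of a multidifferential operator. -/
def MDOp.app {N k : ℕ} (c : MDOp N k) (f : Fin k → SmFn N) : SmFn N :=
  fun x => c.sum fun T u => u x * ∏ t, xDfM (T t) (f t) x

/-- A multidifferential operator has smooth coefficients. -/
def MDOp.Smooth {N k : ℕ} (c : MDOp N k) : Prop := ∀ T, ContDiff ℝ (⊤ : ℕ∞) (c T)

/-- A family of bidifferential operators `C_k`, extended `ℂ[[ℏ]]`-bilinearly: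
`F ⋆ G = Σ ℏ^{k+l+l'} C_k(F_l, G_{l'})`. -/
def starN {N : ℕ} (C : ℕ → MDOp N 2) (F G : SmSer N) : SmSer N :=
  fun m => ∑ k ∈ Finset.range (m + 1), ∑ l ∈ Finset.range (m - k + 1),
    MDOp.app (C k) ![F l, G (m - k - l)]

/-- The `ℂ[ℏ⁻¹,ℏ]]`-bilinear extension of a star-product to Laurent series. -/
def starZ {N : ℕ} (C : ℕ → MDOp N 2) (F G : SmLau N) : SmLau N :=
  fun m => ∑ᶠ p : ℕ × ℤ, MDOp.app (C p.1) ![F p.2, G (m - p.1 - p.2)]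

/-- Action of a Laurent cochain `c = Σ_l ℏ^l c_l` of multidifferential operators
on a `k`-tuple of Laurent series. -/
def lac {N k : ℕ} (cc : ℤ → MDOp N k) (u : Fin k → SmLau N) : SmLau N :=
  fun m => ∑ᶠ v : Fin k → ℤ, MDOp.app (cc (m - ∑ t, v t)) fun t => u t (v t)

/-- A differential star-product on `ℝ^{2n}` quantizing the standard symplectic
structure: `f ⋆ g = Σ ℏ^k C_k(f,g)` with `C_k` bidifferential, `C₀(f,g) = fg`,
`1` a unit, `⋆` associative, and `C₁(f,g) − C₁(g,f) = −i{f,g}`. -/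
structure DiffStar (n : ℕ) where
  C : ℕ → MDOp (2 * n) 2
  smooth : ∀ k, MDOp.Smooth (C k)
  C0 : ∀ f g : SmFn (2 * n), MDOp.app (C 0) ![f, g] = f * g
  unit_left : ∀ F : SmSer (2 * n), SmSer.Smooth F → starN C (oneSer (2 * n)) F = F
  unit_right : ∀ F : SmSer (2 * n), SmSer.Smooth F → starN C F (oneSer (2 * n)) = F
  assoc : ∀ F G H : SmSer (2 * n), SmSer.Smooth F → SmSer.Smooth G → SmSer.Smooth H →
    starN C (starN C F G) H = starN C F (starN C G H)
  C1skew : ∀ f g : SmFn (2 * n), ContDiff ℝ (⊤ : ℕ∞) f → ContDiff ℝ (⊤ : ℕ∞) g →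
    MDOp.app (C 1) ![f, g] - MDOp.app (C 1) ![g, f] = fun x => -Complex.I * pb n f g x

/-! ### Hochschild coboundary -/

/-- The Hochschild coboundary `b̃` of a `k`-cochain with respect to a product `mul`. -/
def hoch {A : Type*} [AddCommGroup A] (mul : A → A → A) {k : ℕ}
    (c : (Fin k → A) → A) : (Fin (k + 1) → A) → A :=
  fun u =>
    mul (u 0) (c fun t => u t.succ)
      + ∑ i : Fin k, ((-1 : ℤ) ^ ((i : ℕ) + 1)) •
          c (fun j => if (j : ℕ) < (i : ℕ) then u j.castSucc
            else if (j : ℕ) = (i : ℕ) then mul (u j.castSucc) (u j.succ)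
            else u j.succ)
      + ((-1 : ℤ) ^ (k + 1)) • mul (c fun t => u t.castSucc) (u (Fin.last k))

/-! ### Formal differential operators on ℂ[[y]] -/

/-- A formal `k`-differential operator on `ℂ[[y^1,…,y^N]]`:
`c(a₁,…,a_k) = Σ_T u^T (∂^{T 1}a₁)⋯(∂^{T k}a_k)` with coefficients
`u^T ∈ ℂ[[y]]` such that for each degree `d` only finitely many tuples `T` have a
coefficient containing a nonzero monomial of degree `≤ d`. -/
structure FDOp (N k : ℕ) where
  u : (Fin k → (Fin N →₀ ℕ)) → Wc N
  fin : ∀ d : ℕ,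
    {T : Fin k → (Fin N →₀ ℕ) | ∃ β : Fin N →₀ ℕ,
      (β.sum fun _ e => e) ≤ d ∧ MvPowerSeries.coeff β (u T) ≠ 0}.Finite

/-- Action of a formal differential operator (the defining sum converges in the
`y`-adic topology; each coefficient receives only finitely many contributions). -/
def FDOp.app {N k : ℕ} (P : FDOp N k) (a : Fin k → Wc N) : Wc N :=
  Wc.mk fun β => ∑ᶠ T : Fin k → (Fin N →₀ ℕ),
    MvPowerSeries.coeff β (P.u T * ∏ t, yDM (T t) (a t))

/-- Action of a Laurent cochain `c = Σ_l ℏ^l c_l` of formal differential operators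
on a `k`-tuple of elements of `W⁺`. -/
def flac {N k : ℕ} (cc : ℤ → FDOp N k) (a : Fin k → WaZ N) : WaZ N :=
  fun m => ∑ᶠ v : Fin k → ℤ, FDOp.app (cc (m - ∑ t, v t)) fun t => a t (v t)

/-! ### Flat sections, Taylor series and quantum exponential -/

/-- Fiberwise Taylor series of a smooth function at `x`. -/
def taylorW {N : ℕ} (f : SmFn N) (x : Fin N → ℝ) : Wc N :=
  Wc.mk fun β => (∏ i : Fin N, ((β i).factorial : ℂ))⁻¹ * xDfM β f x

/-- Sections of the Weyl bundle over `ℝ^{2n}` (W-valued 0-forms). -/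
abbrev Sect (n : ℕ) := Pt n → Wa (2 * n)

/-- The fiberwise Taylor lift of a series of smooth functions. -/
def taylorS {n : ℕ} (F : SmSer (2 * n)) : Sect n := fun x m => taylorW (F m) x

/-- A section has smooth coefficients. -/
def Sect.Smooth {n : ℕ} (u : Sect n) : Prop :=
  ∀ m β, ContDiff ℝ (⊤ : ℕ∞) fun x => MvPowerSeries.coeff β (u x m)

/-- A section is flat for `D = −δ + d`: its component equations read
`∂u/∂x^i = ∂u/∂y^i` for all `i`. -/
def Sect.Flat {n : ℕ} (u : Sect n) : Prop :=
  ∀ (i : Fin (2 * n)) (x : Pt n), xD i u x = yDa i (u x)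

/-- The symbol map `σ(u) = u|_{y=0}`. -/
def sigma {n : ℕ} (u : Sect n) : SmSer (2 * n) :=
  fun m x => MvPowerSeries.coeff 0 (u x m)

/-- Fiberwise Moyal–Weyl product of sections. -/
def wmulS {n : ℕ} (u v : Sect n) : Sect n := fun x => wmul (u x) (v x)

/-! ### Vector fields and Liouville-type operators -/

/-- Action of a vector field `X = Σ_j X^j ∂_j` on a function. -/
def XAct {N : ℕ} (X : Fin N → SmFn N) (f : SmFn N) : SmFn N :=
  fun x => ∑ j, X j x * xDf j f x

/-- A smooth function viewed as a series concentrated in `ℏ`-degree `0`. -/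
def embS {N : ℕ} (f : SmFn N) : SmSer N := fun m => if m = 0 then f else 0

/-- The Hochschild coboundary `b̃X(f,g) = f⋆(Xg) − X(f⋆g) + (Xf)⋆g` of a vector
field, for the Moyal star-product with constant matrix `π`. -/
def bXMoyal {N : ℕ} (π : Matrix (Fin N) (Fin N) ℂ) (X : Fin N → SmFn N)
    (f g : SmFn N) : SmSer N :=
  fMul π (embS f) (embS (XAct X g)) - (fun m => XAct X (fMul π (embS f) (embS g) m))
    + fMul π (embS (XAct X f)) (embS g)

/-- The operator `ℏ ∂_ℏ + X` on `C^∞(ℝ^N,ℂ)[[ℏ]]`. -/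
def LOp {N : ℕ} (X : Fin N → SmFn N) (F : SmSer N) : SmSer N :=
  fun m x => (m : ℂ) * F m x + XAct X (F m) x

/-- The derivative of a star-product with respect to `ℏ`:
`c(f,g) = Σ_{k≥1} k ℏ^{k-1} C_k(f,g)`, extended `ℂ[[ℏ]]`-bilinearly. -/
def dStar {N : ℕ} (C : ℕ → MDOp N 2) (F G : SmSer N) : SmSer N :=
  fun m => ∑ k ∈ Finset.Icc 1 (m + 1), (k : ℂ) •
    ∑ l ∈ Finset.range (m + 1 - k + 1), MDOp.app (C k) ![F l, G (m + 1 - k - l)]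

end StarPaper

namespace StarPaper
noncomputable section
-- ============ AUX ============
section Aux
variable {N : ℕ}

lemma infty_succ_le : ((⊤:ℕ∞) : WithTop ℕ∞) + 1 ≤ ((⊤:ℕ∞) : WithTop ℕ∞) := le_of_eq rfl
lemma one_le_infty : ((⊤:ℕ∞) : WithTop ℕ∞) ≠ 0 := by simp

@[simp] lemma coeff_mk (f : (Fin N →₀ ℕ) → ℂ) (β : Fin N →₀ ℕ) :
    MvPowerSeries.coeff β (Wc.mk f) = f β := rfl

lemma fs_self (β : Fin N →₀ ℕ) (i : Fin N) :
    ((β + Finsupp.single i 1 : Fin N →₀ ℕ) : Fin N → ℕ) i = β i + 1 := by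
  simp [Finsupp.add_apply, Finsupp.single_apply]

lemma fs_ne (β : Fin N →₀ ℕ) {i j : Fin N} (h : j ≠ i) :
    ((β + Finsupp.single i 1 : Fin N →₀ ℕ) : Fin N → ℕ) j = β j := by
  simp [Finsupp.add_apply, Finsupp.single_apply, Ne.symm h]

lemma contDiff_xDf {f : SmFn N} (hf : ContDiff ℝ (⊤:ℕ∞) f) (i : Fin N) :
    ContDiff ℝ (⊤:ℕ∞) (xDf i f) := by
  have h1 : ContDiff ℝ (⊤:ℕ∞) (fderiv ℝ f) := hf.fderiv_right infty_succ_le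
  exact (ContinuousLinearMap.apply ℝ ℂ (Pi.single i 1 : Fin N → ℝ)).contDiff.comp h1

lemma xDf_comm {f : SmFn N} (hf : ContDiff ℝ (⊤:ℕ∞) f) (i j : Fin N) :
    xDf i (xDf j f) = xDf j (xDf i f) := by
  funext x
  have hdf : Differentiable ℝ f := hf.differentiable one_le_infty
  have h1 : ContDiff ℝ (⊤:ℕ∞) (fderiv ℝ f) := hf.fderiv_right infty_succ_le
  have hdf' : Differentiable ℝ (fderiv ℝ f) := h1.differentiable one_le_infty
  have hsym := second_derivative_symmetric (f := f) (f' := fderiv ℝ f)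
      (f'' := fderiv ℝ (fderiv ℝ f) x) (fun y => (hdf y).hasFDerivAt) (hdf' x).hasFDerivAt
  have key : ∀ v w : Fin N → ℝ,
      fderiv ℝ (fun y => fderiv ℝ f y v) x w = fderiv ℝ (fderiv ℝ f) x w v := by
    intro v w
    have h2 : HasFDerivAt (fun y => (ContinuousLinearMap.apply ℝ ℂ v) (fderiv ℝ f y))
        ((ContinuousLinearMap.apply ℝ ℂ v).comp (fderiv ℝ (fderiv ℝ f) x)) x :=
      (ContinuousLinearMap.apply ℝ ℂ v).hasFDerivAt.comp x (hdf' x).hasFDerivAt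
    rw [show (fun y => fderiv ℝ f y v) = fun y => (ContinuousLinearMap.apply ℝ ℂ v) (fderiv ℝ f y)
      from rfl, h2.fderiv]
    rfl
  show fderiv ℝ (fun y => fderiv ℝ f y (Pi.single j 1)) x (Pi.single i 1)
      = fderiv ℝ (fun y => fderiv ℝ f y (Pi.single i 1)) x (Pi.single j 1)
  rw [key, key]
  exact hsym _ _

lemma contDiff_xDf_iterate {f : SmFn N} (hf : ContDiff ℝ (⊤:ℕ∞) f) (i : Fin N) (k : ℕ) :
    ContDiff ℝ (⊤:ℕ∞) ((xDf i)^[k] f) := by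
  induction k with
  | zero => exact hf
  | succ k ih => rw [Function.iterate_succ_apply']; exact contDiff_xDf ih i

lemma contDiff_foldr {f : SmFn N} (hf : ContDiff ℝ (⊤:ℕ∞) f) (α : Fin N → ℕ)
    (L : List (Fin N)) :
    ContDiff ℝ (⊤:ℕ∞) (L.foldr (fun i g => (xDf i)^[α i] g) f) := by
  induction L with
  | nil => exact hf
  | cons j T ih => exact contDiff_xDf_iterate ih j _

lemma xDf_iterate_comm {f : SmFn N} (hf : ContDiff ℝ (⊤:ℕ∞) f) (i j : Fin N) (k : ℕ) :
    xDf i ((xDf j)^[k] f) = (xDf j)^[k] (xDf i f) := by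
  induction k with
  | zero => rfl
  | succ k ih =>
      rw [Function.iterate_succ_apply', xDf_comm (contDiff_xDf_iterate hf j k) i j, ih]
      exact (Function.iterate_succ_apply' (xDf j) k (xDf i f)).symm

lemma xDf_foldr_comm {f : SmFn N} (hf : ContDiff ℝ (⊤:ℕ∞) f) (i : Fin N) (α : Fin N → ℕ)
    (L : List (Fin N)) :
    xDf i (L.foldr (fun j g => (xDf j)^[α j] g) f)
      = L.foldr (fun j g => (xDf j)^[α j] g) (xDf i f) := by
  induction L with
  | nil => rfl
  | cons j T ih =>
      show xDf i ((xDf j)^[α j] _) = (xDf j)^[α j] _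
      rw [xDf_iterate_comm (contDiff_foldr hf α T) i j, ih]

lemma foldr_congr {f : SmFn N} {α α' : Fin N → ℕ} (L : List (Fin N))
    (h : ∀ j ∈ L, α j = α' j) :
    L.foldr (fun j g => (xDf j)^[α j] g) f = L.foldr (fun j g => (xDf j)^[α' j] g) f := by
  induction L with
  | nil => rfl
  | cons j T ih =>
      show (xDf j)^[α j] _ = (xDf j)^[α' j] _
      rw [h j List.mem_cons_self, ih fun a ha => h a (List.mem_cons_of_mem _ ha)]

lemma foldr_add_single {f : SmFn N} (hf : ContDiff ℝ (⊤:ℕ∞) f) (i : Fin N)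
    (α : Fin N →₀ ℕ) :
    ∀ L : List (Fin N), i ∈ L → L.Nodup →
      L.foldr (fun j g => (xDf j)^[(α + Finsupp.single i 1 : Fin N →₀ ℕ) j] g) f
        = L.foldr (fun j g => (xDf j)^[α j] g) (xDf i f) := by
  intro L
  induction L with
  | nil => intro h; simp at h
  | cons j T ih =>
      intro hmem hnd
      rcases List.mem_cons.mp hmem with hji | hiT
      · subst hji
        have hiT : i ∉ T := (List.nodup_cons.mp hnd).1
        show (xDf i)^[(α + Finsupp.single i 1 : Fin N →₀ ℕ) i] _ = (xDf i)^[α i] _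
        have h1 : T.foldr (fun a g => (xDf a)^[(α + Finsupp.single i 1 : Fin N →₀ ℕ) a] g) f
            = T.foldr (fun a g => (xDf a)^[α a] g) f := by
          apply foldr_congr
          intro a ha
          have hne : a ≠ i := by rintro rfl; exact hiT ha
          exact fs_ne α hne
        rw [h1, fs_self α i, Function.iterate_succ_apply, xDf_foldr_comm hf i α T]
      · show (xDf j)^[(α + Finsupp.single i 1 : Fin N →₀ ℕ) j] _ = (xDf j)^[α j] _
        rw [ih hiT (List.nodup_cons.mp hnd).2]
        congr 1
        have hne : j ≠ i := by rintro rfl; exact (List.nodup_cons.mp hnd).1 hiT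
        exact fs_ne α hne

lemma xDfM_add_single {f : SmFn N} (hf : ContDiff ℝ (⊤:ℕ∞) f) (i : Fin N) (α : Fin N →₀ ℕ) :
    xDfM (α + Finsupp.single i 1) f = xDfM α (xDf i f) :=
  foldr_add_single hf i α _ (List.mem_finRange i) (List.nodup_finRange N)

lemma contDiff_xDfM {f : SmFn N} (hf : ContDiff ℝ (⊤:ℕ∞) f) (α : Fin N →₀ ℕ) :
    ContDiff ℝ (⊤:ℕ∞) (xDfM α f) := contDiff_foldr hf _ _

lemma xDf_xDfM {f : SmFn N} (hf : ContDiff ℝ (⊤:ℕ∞) f) (i : Fin N) (α : Fin N →₀ ℕ) :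
    xDf i (xDfM α f) = xDfM (α + Finsupp.single i 1) f := by
  rw [xDfM_add_single hf i α]
  exact xDf_foldr_comm hf i _ _

lemma xDfM_zero (f : SmFn N) : xDfM 0 f = f := by
  show (List.finRange N).foldr _ f = f
  induction List.finRange N with
  | nil => rfl
  | cons j T ih => simpa using ih

lemma addSingle_induction (P : (Fin N →₀ ℕ) → Prop) (h0 : P 0)
    (hstep : ∀ β i, P β → P (β + Finsupp.single i 1)) : ∀ β, P β := by
  have key : ∀ d (β : Fin N →₀ ℕ), (β.sum fun _ e => e) = d → P β := by
    intro d
    induction d with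
    | zero =>
        intro β hβ
        have hb : β = 0 := by
          ext j
          simp only [Finsupp.coe_zero, Pi.zero_apply]
          by_contra h
          have hj : j ∈ β.support := Finsupp.mem_support_iff.mpr h
          have h1 : β j ≤ β.sum fun _ e => e := Finset.single_le_sum
            (f := fun j => β j) (fun _ _ => Nat.zero_le _) hj
          omega
        exact hb ▸ h0
    | succ d ih =>
        intro β hβ
        have hne : β ≠ 0 := by
          intro h; rw [h, Finsupp.sum_zero_index] at hβ; omega
        obtain ⟨i, hi⟩ := Finsupp.support_nonempty_iff.mpr hne
        have hβi : 1 ≤ β i := Nat.one_le_iff_ne_zero.mpr (Finsupp.mem_support_iff.mp hi)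
        have hdec : β = (β - Finsupp.single i 1) + Finsupp.single i 1 := by
          ext j
          rcases eq_or_ne j i with rfl | hne'
          · simp [Finsupp.tsub_apply, Finsupp.single_apply]
            omega
          · simp [Finsupp.tsub_apply, Finsupp.single_apply, Ne.symm hne']
        have hdeg : ((β - Finsupp.single i 1).sum fun _ e => e) = d := by
          have h2 : (β.sum fun _ e => e)
              = ((β - Finsupp.single i 1).sum fun _ e => e) + 1 := by
            conv_lhs => rw [hdec]
            rw [Finsupp.sum_add_index' (fun _ => rfl) (fun _ _ _ => rfl),
              Finsupp.sum_single_index rfl]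
          omega
        rw [hdec]
        exact hstep _ i (ih _ hdeg)
  intro β; exact key _ β rfl

lemma prod_fact_ne_zero (β : Fin N →₀ ℕ) : (∏ j, ((β j).factorial : ℂ)) ≠ 0 :=
  Finset.prod_ne_zero_iff.mpr fun j _ => Nat.cast_ne_zero.mpr (Nat.factorial_ne_zero _)

lemma prod_peel (f g : Fin N → ℂ) (i : Fin N) (c : ℂ)
    (hne : ∀ j, j ≠ i → f j = g j) (hi : f i = c * g i) :
    ∏ j, f j = c * ∏ j, g j := by
  rw [← Finset.mul_prod_erase Finset.univ f (Finset.mem_univ i),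
    ← Finset.mul_prod_erase Finset.univ g (Finset.mem_univ i), hi,
    Finset.prod_congr rfl (fun j hj => hne j (Finset.ne_of_mem_erase hj)), mul_assoc]

lemma prod_fact_add_single (β : Fin N →₀ ℕ) (i : Fin N) :
    (∏ j, ((((β + Finsupp.single i 1 : Fin N →₀ ℕ) j).factorial : ℂ)))
      = ((β i : ℂ) + 1) * ∏ j, ((β j).factorial : ℂ) := by
  apply prod_peel _ _ i
  · intro j hj
    rw [fs_ne β hj]
  · rw [fs_self β i, Nat.factorial_succ]
    push_cast
    ring

lemma natCast_succ_ne_zero (b : ℕ) : ((b : ℂ) + 1) ≠ 0 := by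
  have h : ((b : ℂ) + 1) = ((b + 1 : ℕ) : ℂ) := by push_cast; ring
  rw [h]
  exact Nat.cast_ne_zero.mpr (Nat.succ_ne_zero b)

lemma fact_ratio₁ (b c : ℕ) :
    (((b + (c + 1)).factorial : ℂ)) / ((b.factorial : ℂ))
      = ((b : ℂ) + 1) * ((((b + 1 + c).factorial : ℂ)) / (((b + 1).factorial : ℂ))) := by
  have h1 : b + (c + 1) = b + 1 + c := by omega
  rw [h1, Nat.factorial_succ b]
  have hb : ((b.factorial : ℂ)) ≠ 0 := Nat.cast_ne_zero.mpr (Nat.factorial_ne_zero _)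
  have hb1 : ((b : ℂ) + 1) ≠ 0 := natCast_succ_ne_zero b
  push_cast
  field_simp

lemma fact_ratio₂ (b c : ℕ) :
    (((b + (c + 1)).factorial : ℂ)) / ((b.factorial : ℂ))
      = ((b : ℂ) + (c : ℂ) + 1) * ((((b + c).factorial : ℂ)) / ((b.factorial : ℂ))) := by
  have h1 : b + (c + 1) = (b + c) + 1 := by omega
  rw [h1, Nat.factorial_succ (b + c)]
  have hb : ((b.factorial : ℂ)) ≠ 0 := Nat.cast_ne_zero.mpr (Nat.factorial_ne_zero _)
  push_cast
  field_simp

lemma yDM_zero (a : Wc N) : yDM 0 a = a := by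
  apply MvPowerSeries.ext; intro β
  show (∏ j, (((β j + (0 : Fin N →₀ ℕ) j).factorial : ℂ) / ((β j).factorial : ℂ)))
      * MvPowerSeries.coeff (β + 0) a = MvPowerSeries.coeff β a
  have h1 : (∏ j, (((β j + (0 : Fin N →₀ ℕ) j).factorial : ℂ) / ((β j).factorial : ℂ))) = 1 := by
    apply Finset.prod_eq_one
    intro j _
    simp only [Finsupp.coe_zero, Pi.zero_apply, add_zero]
    exact div_self (Nat.cast_ne_zero.mpr (Nat.factorial_ne_zero _))
  rw [h1, add_zero, one_mul]

lemma yD_yDM (i : Fin N) (α : Fin N →₀ ℕ) (a : Wc N) :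
    yD i (yDM α a) = yDM (α + Finsupp.single i 1) a := by
  apply MvPowerSeries.ext; intro β
  show ((β i : ℂ) + 1) *
      ((∏ j, ((((β + Finsupp.single i 1 : Fin N →₀ ℕ) j + α j).factorial : ℂ)
          / (((β + Finsupp.single i 1 : Fin N →₀ ℕ) j).factorial : ℂ)))
        * MvPowerSeries.coeff ((β + Finsupp.single i 1) + α) a)
    = (∏ j, (((β j + (α + Finsupp.single i 1 : Fin N →₀ ℕ) j).factorial : ℂ)
          / ((β j).factorial : ℂ)))
        * MvPowerSeries.coeff (β + (α + Finsupp.single i 1)) a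
  rw [show β + Finsupp.single i 1 + α = β + (α + Finsupp.single i 1) by
    rw [add_assoc, add_comm (Finsupp.single i 1) α]]
  have hp : (∏ j, (((β j + (α + Finsupp.single i 1 : Fin N →₀ ℕ) j).factorial : ℂ)
          / ((β j).factorial : ℂ)))
      = ((β i : ℂ) + 1) *
        ∏ j, ((((β + Finsupp.single i 1 : Fin N →₀ ℕ) j + α j).factorial : ℂ)
          / (((β + Finsupp.single i 1 : Fin N →₀ ℕ) j).factorial : ℂ)) := by
    apply prod_peel _ _ i
    · intro j hj
      rw [fs_ne α hj, fs_ne β hj]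
    · rw [fs_self α i, fs_self β i]
      exact fact_ratio₁ (β i) (α i)
  rw [hp]
  ring

lemma yDM_yD (i : Fin N) (α : Fin N →₀ ℕ) (a : Wc N) :
    yDM α (yD i a) = yDM (α + Finsupp.single i 1) a := by
  apply MvPowerSeries.ext; intro β
  show (∏ j, (((β j + α j).factorial : ℂ) / ((β j).factorial : ℂ)))
        * ((((β + α : Fin N →₀ ℕ) i : ℂ) + 1)
          * MvPowerSeries.coeff ((β + α) + Finsupp.single i 1) a)
    = (∏ j, (((β j + (α + Finsupp.single i 1 : Fin N →₀ ℕ) j).factorial : ℂ)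
          / ((β j).factorial : ℂ)))
        * MvPowerSeries.coeff (β + (α + Finsupp.single i 1)) a
  rw [show (β + α : Fin N →₀ ℕ) + Finsupp.single i 1 = β + (α + Finsupp.single i 1) by
    rw [add_assoc]]
  have hp : (∏ j, (((β j + (α + Finsupp.single i 1 : Fin N →₀ ℕ) j).factorial : ℂ)
          / ((β j).factorial : ℂ)))
      = ((β i : ℂ) + (α i : ℂ) + 1) *
        ∏ j, (((β j + α j).factorial : ℂ) / ((β j).factorial : ℂ)) := by
    apply prod_peel _ _ i
    · intro j hj
      rw [fs_ne α hj]
    · rw [fs_self α i]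
      exact fact_ratio₂ (β i) (α i)
  have ha : (((β + α : Fin N →₀ ℕ) i : ℂ)) = (β i : ℂ) + (α i : ℂ) := by
    rw [Finsupp.add_apply]; push_cast; ring
  rw [hp, ha]
  ring

def epsT {k : ℕ} (t : Fin k → Fin N) : Fin N →₀ ℕ := ∑ s, Finsupp.single (t s) 1

lemma iterD_zero' {R : Type*} (D : Fin N → R → R) (t : Fin 0 → Fin N) (a : R) :
    iterD D t a = a := rfl

lemma iterD_succ' {R : Type*} (D : Fin N → R → R) {k : ℕ} (t : Fin (k + 1) → Fin N) (a : R) :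
    iterD D t a = D (t 0) (iterD D (fun s => t s.succ) a) := rfl

lemma epsT_zero (t : Fin 0 → Fin N) : epsT t = 0 := by simp [epsT]

lemma epsT_succ {k : ℕ} (t : Fin (k + 1) → Fin N) :
    epsT t = epsT (fun s => t s.succ) + Finsupp.single (t 0) 1 := by
  rw [epsT, Fin.sum_univ_succ, add_comm]
  rfl

lemma iterD_yD_eq_yDM : ∀ {k : ℕ} (t : Fin k → Fin N) (a : Wc N),
    iterD yD t a = yDM (epsT t) a := by
  intro k
  induction k with
  | zero => intro t a; rw [iterD_zero', epsT_zero, yDM_zero]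
  | succ k ih =>
      intro t a
      rw [iterD_succ', ih, yD_yDM, ← epsT_succ]

def yDL (i : Fin N) : Wc N →ₗ[ℂ] Wc N where
  toFun := yD i
  map_add' a b := by
    apply MvPowerSeries.ext; intro β
    simp only [yD, coeff_mk, map_add]
    ring
  map_smul' c a := by
    apply MvPowerSeries.ext; intro β
    simp only [yD, coeff_mk, map_smul, smul_eq_mul, RingHom.id_apply]
    ring

lemma yD_sum {ι : Type*} (i : Fin N) (s : Finset ι) (f : ι → Wc N) :
    yD i (∑ a ∈ s, f a) = ∑ a ∈ s, yD i (f a) := map_sum (yDL i) f s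

lemma yD_smul (i : Fin N) (c : ℂ) (a : Wc N) : yD i (c • a) = c • yD i a :=
  map_smul (yDL i) c a

lemma finsupp_sub_add_single {γ : Fin N →₀ ℕ} {i : Fin N} (h : γ i ≠ 0) :
    (γ - Finsupp.single i 1) + Finsupp.single i 1 = γ := by
  ext j
  rcases eq_or_ne j i with rfl | hne
  · rw [fs_self]
    simp only [Finsupp.tsub_apply, Finsupp.single_eq_same]
    omega
  · rw [fs_ne _ hne]
    simp [Finsupp.tsub_apply, Finsupp.single_apply, Ne.symm hne]

lemma finsupp_add_sub_single (γ : Fin N →₀ ℕ) (i : Fin N) :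
    (γ + Finsupp.single i 1) - Finsupp.single i 1 = γ := by
  ext j
  rcases eq_or_ne j i with rfl | hne
  · simp only [Finsupp.tsub_apply, fs_self, Finsupp.single_eq_same]
    omega
  · simp only [Finsupp.tsub_apply, fs_ne _ hne, Finsupp.single_eq_of_ne hne]
    omega

lemma antidiag_pt {β p1 p2 : Fin N →₀ ℕ} {i : Fin N} (h : p1 + p2 = β + Finsupp.single i 1)
    (j : Fin N) : p1 j + p2 j = β j + (Finsupp.single i 1 : Fin N →₀ ℕ) j := by
  rw [← Finsupp.add_apply, ← Finsupp.add_apply, h]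

lemma antidiag_mem_sub_left {β p1 p2 : Fin N →₀ ℕ} {i : Fin N}
    (h : p1 + p2 = β + Finsupp.single i 1) (hne : p1 i ≠ 0) :
    (p1 - Finsupp.single i 1) + p2 = β := by
  ext j
  have hj := antidiag_pt h j
  simp only [Finsupp.add_apply, Finsupp.tsub_apply]
  rcases eq_or_ne j i with rfl | hne'
  · simp only [Finsupp.single_eq_same] at hj ⊢
    omega
  · simp only [Finsupp.single_eq_of_ne hne'] at hj ⊢
    omega

lemma antidiag_mem_sub_right {β p1 p2 : Fin N →₀ ℕ} {i : Fin N}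
    (h : p1 + p2 = β + Finsupp.single i 1) (hne : p2 i ≠ 0) :
    p1 + (p2 - Finsupp.single i 1) = β := by
  have h' : p2 + p1 = β + Finsupp.single i 1 := by rw [add_comm]; exact h
  rw [add_comm]
  exact antidiag_mem_sub_left h' hne

lemma sum_antidiag_left (β : Fin N →₀ ℕ) (i : Fin N) (A B : (Fin N →₀ ℕ) → ℂ) :
    (Finset.HasAntidiagonal.antidiagonal (β + Finsupp.single i 1)).sum
        (fun p : (Fin N →₀ ℕ) × (Fin N →₀ ℕ) => ((p.1 i : ℂ)) * (A p.1 * B p.2))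
      = (Finset.HasAntidiagonal.antidiagonal β).sum
        (fun p : (Fin N →₀ ℕ) × (Fin N →₀ ℕ) =>
          ((p.1 i : ℂ) + 1) * (A (p.1 + Finsupp.single i 1) * B p.2)) := by
  rw [← Finset.sum_filter_of_ne
    (p := fun p : (Fin N →₀ ℕ) × (Fin N →₀ ℕ) => p.1 i ≠ 0)
    (fun p _ hne h => hne (by rw [h, Nat.cast_zero, zero_mul]))]
  apply Finset.sum_nbij' (i := fun p : (Fin N →₀ ℕ) × (Fin N →₀ ℕ) =>
      (p.1 - Finsupp.single i 1, p.2))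
    (j := fun p : (Fin N →₀ ℕ) × (Fin N →₀ ℕ) => (p.1 + Finsupp.single i 1, p.2))
  · intro p hp
    rw [Finset.mem_filter, Finset.HasAntidiagonal.mem_antidiagonal] at hp
    rw [Finset.HasAntidiagonal.mem_antidiagonal]
    exact antidiag_mem_sub_left hp.1 hp.2
  · intro q hq
    rw [Finset.HasAntidiagonal.mem_antidiagonal] at hq
    rw [Finset.mem_filter, Finset.HasAntidiagonal.mem_antidiagonal]
    constructor
    · rw [add_right_comm, hq]
    · rw [fs_self]; omega
  · intro p hp
    rw [Finset.mem_filter] at hp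
    exact Prod.ext (finsupp_sub_add_single hp.2) rfl
  · intro q _
    exact Prod.ext (finsupp_add_sub_single q.1 i) rfl
  · intro p hp
    rw [Finset.mem_filter] at hp
    rw [finsupp_sub_add_single hp.2]
    congr 1
    have h1 : ((p.1 - Finsupp.single i 1 : Fin N →₀ ℕ) i) + 1 = p.1 i := by
      simp only [Finsupp.tsub_apply, Finsupp.single_eq_same]
      omega
    rw [← h1]
    push_cast
    ring

lemma sum_antidiag_right (β : Fin N →₀ ℕ) (i : Fin N) (A B : (Fin N →₀ ℕ) → ℂ) :
    (Finset.HasAntidiagonal.antidiagonal (β + Finsupp.single i 1)).sum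
        (fun p : (Fin N →₀ ℕ) × (Fin N →₀ ℕ) => ((p.2 i : ℂ)) * (A p.1 * B p.2))
      = (Finset.HasAntidiagonal.antidiagonal β).sum
        (fun p : (Fin N →₀ ℕ) × (Fin N →₀ ℕ) =>
          ((p.2 i : ℂ) + 1) * (A p.1 * B (p.2 + Finsupp.single i 1))) := by
  rw [← Finset.sum_filter_of_ne
    (p := fun p : (Fin N →₀ ℕ) × (Fin N →₀ ℕ) => p.2 i ≠ 0)
    (fun p _ hne h => hne (by rw [h, Nat.cast_zero, zero_mul]))]
  apply Finset.sum_nbij' (i := fun p : (Fin N →₀ ℕ) × (Fin N →₀ ℕ) =>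
      (p.1, p.2 - Finsupp.single i 1))
    (j := fun p : (Fin N →₀ ℕ) × (Fin N →₀ ℕ) => (p.1, p.2 + Finsupp.single i 1))
  · intro p hp
    rw [Finset.mem_filter, Finset.HasAntidiagonal.mem_antidiagonal] at hp
    rw [Finset.HasAntidiagonal.mem_antidiagonal]
    exact antidiag_mem_sub_right hp.1 hp.2
  · intro q hq
    rw [Finset.HasAntidiagonal.mem_antidiagonal] at hq
    rw [Finset.mem_filter, Finset.HasAntidiagonal.mem_antidiagonal]
    constructor
    · rw [← add_assoc, hq]
    · rw [fs_self]; omega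
  · intro p hp
    rw [Finset.mem_filter] at hp
    exact Prod.ext rfl (finsupp_sub_add_single hp.2)
  · intro q _
    exact Prod.ext rfl (finsupp_add_sub_single q.2 i)
  · intro p hp
    rw [Finset.mem_filter] at hp
    rw [finsupp_sub_add_single hp.2]
    congr 1
    have h1 : ((p.2 - Finsupp.single i 1 : Fin N →₀ ℕ) i) + 1 = p.2 i := by
      simp only [Finsupp.tsub_apply, Finsupp.single_eq_same]
      omega
    rw [← h1]
    push_cast
    ring

lemma yD_mul (i : Fin N) (a b : Wc N) : yD i (a * b) = yD i a * b + a * yD i b := by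
  apply MvPowerSeries.ext; intro β
  rw [map_add, MvPowerSeries.coeff_mul, MvPowerSeries.coeff_mul]
  rw [show MvPowerSeries.coeff β (yD i (a * b))
      = ((β i : ℂ) + 1) * MvPowerSeries.coeff (β + Finsupp.single i 1) (a * b) from rfl,
    MvPowerSeries.coeff_mul, Finset.mul_sum]
  have hsplit : ∀ p ∈ Finset.HasAntidiagonal.antidiagonal (β + Finsupp.single i 1),
      ((β i : ℂ) + 1) * (MvPowerSeries.coeff p.1 a * MvPowerSeries.coeff p.2 b)
        = (p.1 i : ℂ) * (MvPowerSeries.coeff p.1 a * MvPowerSeries.coeff p.2 b)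
          + (p.2 i : ℂ) * (MvPowerSeries.coeff p.1 a * MvPowerSeries.coeff p.2 b) := by
    intro p hp
    rw [Finset.HasAntidiagonal.mem_antidiagonal] at hp
    have h1 : p.1 i + p.2 i = β i + 1 := by
      have := antidiag_pt hp i
      simpa [Finsupp.single_apply] using this
    rw [← add_mul]
    congr 1
    rw [← Nat.cast_add, h1]
    push_cast
    ring
  rw [Finset.sum_congr rfl hsplit, Finset.sum_add_distrib,
    sum_antidiag_left β i (fun γ => MvPowerSeries.coeff γ a)
      (fun γ => MvPowerSeries.coeff γ b),
    sum_antidiag_right β i (fun γ => MvPowerSeries.coeff γ a)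
      (fun γ => MvPowerSeries.coeff γ b)]
  congr 1
  · apply Finset.sum_congr rfl
    intro p _
    rw [show MvPowerSeries.coeff p.1 (yD i a)
      = ((p.1 i : ℂ) + 1) * MvPowerSeries.coeff (p.1 + Finsupp.single i 1) a from rfl]
    ring
  · apply Finset.sum_congr rfl
    intro p _
    rw [show MvPowerSeries.coeff p.2 (yD i b)
      = ((p.2 i : ℂ) + 1) * MvPowerSeries.coeff (p.2 + Finsupp.single i 1) b from rfl]
    ring

lemma yD_iterD (i : Fin N) {k : ℕ} (t : Fin k → Fin N) (a : Wc N) :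
    yD i (iterD yD t a) = iterD yD t (yD i a) := by
  rw [iterD_yD_eq_yDM, iterD_yD_eq_yDM, yD_yDM, yDM_yD]

lemma yD_moyalTerm (π : Matrix (Fin N) (Fin N) ℂ) (i : Fin N) (k : ℕ) (a b : Wc N) :
    yD i (moyalTerm yD π k a b)
      = moyalTerm yD π k (yD i a) b + moyalTerm yD π k a (yD i b) := by
  unfold moyalTerm
  rw [yD_smul, yD_sum, ← smul_add, ← Finset.sum_add_distrib]
  congr 1
  apply Finset.sum_congr rfl
  intro ti _
  rw [yD_sum, ← Finset.sum_add_distrib]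
  apply Finset.sum_congr rfl
  intro tj _
  rw [yD_smul, yD_mul, yD_iterD, yD_iterD, smul_add]

def Qf (γ α : Fin N →₀ ℕ) : ℂ :=
  ∏ j, (((γ j + α j).factorial : ℂ) / ((γ j).factorial : ℂ))

lemma coeff_yDM (α : Fin N →₀ ℕ) (a : Wc N) (β : Fin N →₀ ℕ) :
    MvPowerSeries.coeff β (yDM α a) = Qf β α * MvPowerSeries.coeff (β + α) a := rfl

lemma Qf_zero_left (α : Fin N →₀ ℕ) : Qf 0 α = ∏ j, ((α j).factorial : ℂ) := by
  unfold Qf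
  apply Finset.prod_congr rfl
  intro j _
  simp only [Finsupp.coe_zero, Pi.zero_apply, zero_add, Nat.factorial_zero, Nat.cast_one,
    div_one]

lemma inv_fact_succ (β : Fin N →₀ ℕ) (i : Fin N) :
    (∏ j, ((β j).factorial : ℂ))⁻¹
      = ((β i : ℂ) + 1) * (∏ j, ((((β + Finsupp.single i 1 : Fin N →₀ ℕ) j).factorial : ℂ)))⁻¹ := by
  rw [prod_fact_add_single β i, mul_inv, ← mul_assoc,
    mul_inv_cancel₀ (natCast_succ_ne_zero (β i)), one_mul]

lemma coeff0_mul (a b : Wc N) :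
    MvPowerSeries.coeff (0 : Fin N →₀ ℕ) (a * b)
      = MvPowerSeries.coeff 0 a * MvPowerSeries.coeff 0 b := by
  rw [MvPowerSeries.coeff_zero_eq_constantCoeff, map_mul]

lemma fderiv_const_mul_dir {f : SmFn N} (hf : ContDiff ℝ (⊤:ℕ∞) f) (c : ℂ)
    (x : Fin N → ℝ) (v : Fin N → ℝ) :
    fderiv ℝ (fun y => c * f y) x v = c * fderiv ℝ f x v := by
  rw [fderiv_const_mul ((hf.differentiable one_le_infty).differentiableAt) c]
  simp [smul_eq_mul]

lemma iterD_xDf_eq_xDfM : ∀ {k : ℕ} (t : Fin k → Fin N) (f : SmFn N),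
    ContDiff ℝ (⊤:ℕ∞) f → iterD xDf t f = xDfM (epsT t) f := by
  intro k
  induction k with
  | zero => intro t f _; rw [iterD_zero', epsT_zero, xDfM_zero]
  | succ k ih =>
      intro t f hf
      rw [iterD_succ', ih _ f hf, xDf_xDfM hf, ← epsT_succ]

end Aux

section Aux3
variable {n : ℕ}

lemma taylorS_coeff (F : SmSer (2 * n)) (x : Pt n) (m : ℕ) (β : Fin (2 * n) →₀ ℕ) :
    MvPowerSeries.coeff β (taylorS F x m)
      = (∏ j, ((β j).factorial : ℂ))⁻¹ * xDfM β (F m) x := rfl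

lemma taylorS_smooth {F : SmSer (2 * n)} (hF : SmSer.Smooth F) :
    Sect.Smooth (taylorS F) := by
  intro m β
  show ContDiff ℝ (⊤:ℕ∞) fun x => (∏ j, ((β j).factorial : ℂ))⁻¹ * xDfM β (F m) x
  exact contDiff_const.mul (contDiff_xDfM (hF m) β)

lemma taylorS_flat {F : SmSer (2 * n)} (hF : SmSer.Smooth F) :
    Sect.Flat (taylorS F) := by
  intro i x
  funext m
  apply MvPowerSeries.ext; intro β
  show fderiv ℝ (fun y => MvPowerSeries.coeff β (taylorS F y m)) x (Pi.single i 1)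
      = ((β i : ℂ) + 1) * MvPowerSeries.coeff (β + Finsupp.single i 1) (taylorS F x m)
  have hfun : (fun y => MvPowerSeries.coeff β (taylorS F y m))
      = fun y => (∏ j, ((β j).factorial : ℂ))⁻¹ * xDfM β (F m) y := rfl
  rw [hfun, fderiv_const_mul_dir (contDiff_xDfM (hF m) β),
    show fderiv ℝ (xDfM β (F m)) x (Pi.single i 1) = xDf i (xDfM β (F m)) x from rfl,
    congrFun (xDf_xDfM (hF m) i β) x, taylorS_coeff, inv_fact_succ β i]
  ring

lemma taylorS_sigma (F : SmSer (2 * n)) : sigma (taylorS F) = F := by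
  funext m x
  show (∏ j, (((0 : Fin (2*n) →₀ ℕ) j).factorial : ℂ))⁻¹ * xDfM 0 (F m) x = F m x
  rw [xDfM_zero]
  simp

lemma sigma_smooth {u : Sect n} (hu : Sect.Smooth u) : SmSer.Smooth (sigma u) :=
  fun m => hu m 0

lemma flat_coeff {u : Sect n} (hu : Sect.Smooth u) (hfl : Sect.Flat u) (m : ℕ) :
    ∀ β : Fin (2 * n) →₀ ℕ, (fun x => MvPowerSeries.coeff β (u x m))
      = fun x => (∏ j, ((β j).factorial : ℂ))⁻¹ * xDfM β (sigma u m) x := by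
  refine addSingle_induction _ ?_ ?_
  · funext x
    rw [xDfM_zero]
    simp [sigma]
  · intro β i ih
    funext x
    have hsm : ContDiff ℝ (⊤:ℕ∞) (sigma u m) := hu m 0
    have h1 : MvPowerSeries.coeff β (xD i u x m)
        = MvPowerSeries.coeff β (yDa i (u x) m) := by rw [hfl i x]
    have h2 : MvPowerSeries.coeff β (xD i u x m)
        = (∏ j, ((β j).factorial : ℂ))⁻¹
          * xDfM (β + Finsupp.single i 1) (sigma u m) x := by
      show fderiv ℝ (fun y => MvPowerSeries.coeff β (u y m)) x (Pi.single i 1) = _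
      rw [ih, fderiv_const_mul_dir (contDiff_xDfM hsm β),
        show fderiv ℝ (xDfM β (sigma u m)) x (Pi.single i 1)
          = xDf i (xDfM β (sigma u m)) x from rfl,
        congrFun (xDf_xDfM hsm i β) x]
    have h3 : MvPowerSeries.coeff β (yDa i (u x) m)
        = ((β i : ℂ) + 1)
          * MvPowerSeries.coeff (β + Finsupp.single i 1) (u x m) := rfl
    have h4 : ((β i : ℂ) + 1)
          * MvPowerSeries.coeff (β + Finsupp.single i 1) (u x m)
        = ((β i : ℂ) + 1)
          * ((∏ j, ((((β + Finsupp.single i 1 : Fin (2*n) →₀ ℕ) j).factorial : ℂ)))⁻¹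
            * xDfM (β + Finsupp.single i 1) (sigma u m) x) := by
      rw [← h3, ← h1, h2, inv_fact_succ β i]
      ring
    exact mul_left_cancel₀ (natCast_succ_ne_zero (β i)) h4

lemma flat_unique {u : Sect n} {F : SmSer (2 * n)} (hu : Sect.Smooth u)
    (hfl : Sect.Flat u) (hσ : sigma u = F) : u = taylorS F := by
  funext x
  funext m
  apply MvPowerSeries.ext; intro β
  have h := congrFun (flat_coeff hu hfl m β) x
  rw [hσ] at h
  exact h

lemma wmul_yDa (i : Fin (2 * n)) (a b : Wa (2 * n)) :
    yDa i (wmul a b) = wmul (yDa i a) b + wmul a (yDa i b) := by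
  funext m
  show yD i (∑ k ∈ Finset.range (m + 1), ∑ l ∈ Finset.range (m - k + 1),
      moyalTerm yD (stdPi n) k (a l) (b (m - k - l)))
    = (∑ k ∈ Finset.range (m + 1), ∑ l ∈ Finset.range (m - k + 1),
        moyalTerm yD (stdPi n) k (yD i (a l)) (b (m - k - l)))
      + ∑ k ∈ Finset.range (m + 1), ∑ l ∈ Finset.range (m - k + 1),
          moyalTerm yD (stdPi n) k (a l) (yD i (b (m - k - l)))
  rw [yD_sum, ← Finset.sum_add_distrib]
  refine Finset.sum_congr rfl fun k _ => ?_
  rw [yD_sum, ← Finset.sum_add_distrib]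
  refine Finset.sum_congr rfl fun l _ => ?_
  exact yD_moyalTerm (stdPi n) i k _ _

lemma coeff_moyalTerm (π : Matrix (Fin (2*n)) (Fin (2*n)) ℂ) (k : ℕ) (a b : Wc (2*n))
    (β : Fin (2*n) →₀ ℕ) :
    MvPowerSeries.coeff β (moyalTerm yD π k a b)
      = ((-Complex.I / 2) ^ k / (Nat.factorial k : ℂ)) *
          ∑ ti : Fin k → Fin (2*n), ∑ tj : Fin k → Fin (2*n),
            (∏ t, π (ti t) (tj t)) *
              (Finset.HasAntidiagonal.antidiagonal β).sum
                (fun p : (Fin (2*n) →₀ ℕ) × (Fin (2*n) →₀ ℕ) =>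
                  (Qf p.1 (epsT ti) * MvPowerSeries.coeff (p.1 + epsT ti) a)
                    * (Qf p.2 (epsT tj) * MvPowerSeries.coeff (p.2 + epsT tj) b)) := by
  unfold moyalTerm
  rw [map_smul, smul_eq_mul]
  congr 1
  rw [map_sum]
  refine Finset.sum_congr rfl fun ti _ => ?_
  rw [map_sum]
  refine Finset.sum_congr rfl fun tj _ => ?_
  rw [map_smul, smul_eq_mul]
  congr 1
  rw [MvPowerSeries.coeff_mul]
  refine Finset.sum_congr rfl fun p _ => ?_
  rw [iterD_yD_eq_yDM, iterD_yD_eq_yDM, coeff_yDM, coeff_yDM]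

lemma coeff_wmul (a b : Wa (2 * n)) (m : ℕ) (β : Fin (2*n) →₀ ℕ) :
    MvPowerSeries.coeff β (wmul a b m)
      = ∑ k ∈ Finset.range (m + 1), ∑ l ∈ Finset.range (m - k + 1),
          MvPowerSeries.coeff β (moyalTerm yD (stdPi n) k (a l) (b (m - k - l))) := by
  rw [show wmul a b m = ∑ k ∈ Finset.range (m + 1), ∑ l ∈ Finset.range (m - k + 1),
      moyalTerm yD (stdPi n) k (a l) (b (m - k - l)) from rfl, map_sum]
  exact Finset.sum_congr rfl fun k _ => map_sum _ _ _

lemma coeff_wmul_expand (a b : Wa (2 * n)) (m : ℕ) (β : Fin (2*n) →₀ ℕ) :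
    MvPowerSeries.coeff β (wmul a b m)
      = ∑ k ∈ Finset.range (m + 1), ∑ l ∈ Finset.range (m - k + 1),
          ((-Complex.I / 2) ^ k / (Nat.factorial k : ℂ)) *
            ∑ ti : Fin k → Fin (2*n), ∑ tj : Fin k → Fin (2*n),
              (∏ t, stdPi n (ti t) (tj t)) *
                (Finset.HasAntidiagonal.antidiagonal β).sum
                  (fun p : (Fin (2*n) →₀ ℕ) × (Fin (2*n) →₀ ℕ) =>
                    (Qf p.1 (epsT ti) * MvPowerSeries.coeff (p.1 + epsT ti) (a l))
                      * (Qf p.2 (epsT tj)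
                        * MvPowerSeries.coeff (p.2 + epsT tj) (b (m - k - l)))) := by
  rw [coeff_wmul]
  exact Finset.sum_congr rfl fun k _ => Finset.sum_congr rfl fun l _ =>
    coeff_moyalTerm (stdPi n) k _ _ β

def DDp (i : Fin (2 * n)) (x : Pt n) (f : Pt n → ℂ) (s : ℂ) : Prop :=
  DifferentiableAt ℝ f x ∧ fderiv ℝ f x (Pi.single i 1) = s

lemma DDp.sum {i : Fin (2 * n)} {x : Pt n} {ι : Type*} (t : Finset ι)
    (f : ι → Pt n → ℂ) (s : ι → ℂ) (h : ∀ a ∈ t, DDp i x (f a) (s a)) :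
    DDp i x (fun y => ∑ a ∈ t, f a y) (∑ a ∈ t, s a) := by
  constructor
  · exact DifferentiableAt.fun_sum fun a ha => (h a ha).1
  · rw [fderiv_fun_sum fun a ha => (h a ha).1, ContinuousLinearMap.sum_apply]
    exact Finset.sum_congr rfl fun a ha => (h a ha).2

lemma DDp.const_mul {i : Fin (2 * n)} {x : Pt n} {f : Pt n → ℂ} {s : ℂ} (c : ℂ)
    (h : DDp i x f s) : DDp i x (fun y => c * f y) (c * s) := by
  refine ⟨h.1.const_mul c, ?_⟩
  rw [fderiv_const_mul h.1 c, ContinuousLinearMap.smul_apply, h.2, smul_eq_mul]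

lemma DDp.mul {i : Fin (2 * n)} {x : Pt n} {f g : Pt n → ℂ} {s r : ℂ}
    (hf : DDp i x f s) (hg : DDp i x g r) :
    DDp i x (fun y => f y * g y) (s * g x + f x * r) := by
  refine ⟨hf.1.mul hg.1, ?_⟩
  rw [fderiv_fun_mul hf.1 hg.1]
  simp only [ContinuousLinearMap.add_apply, ContinuousLinearMap.smul_apply, hf.2, hg.2,
    smul_eq_mul]
  ring

lemma DDp.coeff_sect {i : Fin (2 * n)} {x : Pt n} {u : Sect n} (hu : Sect.Smooth u)
    (γ : Fin (2*n) →₀ ℕ) (l : ℕ) :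
    DDp i x (fun y => MvPowerSeries.coeff γ (u y l))
      (MvPowerSeries.coeff γ (xD i u x l)) :=
  ⟨((hu l γ).differentiable one_le_infty).differentiableAt, rfl⟩

lemma xD_wmulS {u v : Sect n} (hu : Sect.Smooth u) (hv : Sect.Smooth v)
    (i : Fin (2 * n)) (x : Pt n) :
    xD i (wmulS u v) x = wmul (xD i u x) (v x) + wmul (u x) (xD i v x) := by
  funext m
  apply MvPowerSeries.ext; intro β
  have key : DDp i x (fun y => MvPowerSeries.coeff β (wmul (u y) (v y) m))
      (MvPowerSeries.coeff β
        ((wmul (xD i u x) (v x) + wmul (u x) (xD i v x)) m)) := by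
    have hfun : (fun y => MvPowerSeries.coeff β (wmul (u y) (v y) m))
        = fun y => ∑ k ∈ Finset.range (m + 1), ∑ l ∈ Finset.range (m - k + 1),
            ((-Complex.I / 2) ^ k / (Nat.factorial k : ℂ)) *
              ∑ ti : Fin k → Fin (2*n), ∑ tj : Fin k → Fin (2*n),
                (∏ t, stdPi n (ti t) (tj t)) *
                  (Finset.HasAntidiagonal.antidiagonal β).sum
                    (fun p : (Fin (2*n) →₀ ℕ) × (Fin (2*n) →₀ ℕ) =>
                      (Qf p.1 (epsT ti) * MvPowerSeries.coeff (p.1 + epsT ti) (u y l))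
                        * (Qf p.2 (epsT tj)
                          * MvPowerSeries.coeff (p.2 + epsT tj) (v y (m - k - l)))) :=
      funext fun y => coeff_wmul_expand (u y) (v y) m β
    have hval : MvPowerSeries.coeff β
          ((wmul (xD i u x) (v x) + wmul (u x) (xD i v x)) m)
        = ∑ k ∈ Finset.range (m + 1), ∑ l ∈ Finset.range (m - k + 1),
            ((-Complex.I / 2) ^ k / (Nat.factorial k : ℂ)) *
              ∑ ti : Fin k → Fin (2*n), ∑ tj : Fin k → Fin (2*n),
                (∏ t, stdPi n (ti t) (tj t)) *
                  (Finset.HasAntidiagonal.antidiagonal β).sum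
                    (fun p : (Fin (2*n) →₀ ℕ) × (Fin (2*n) →₀ ℕ) =>
                      (Qf p.1 (epsT ti)
                          * MvPowerSeries.coeff (p.1 + epsT ti) (xD i u x l))
                        * (Qf p.2 (epsT tj)
                          * MvPowerSeries.coeff (p.2 + epsT tj) (v x (m - k - l)))
                      + (Qf p.1 (epsT ti) * MvPowerSeries.coeff (p.1 + epsT ti) (u x l))
                        * (Qf p.2 (epsT tj)
                          * MvPowerSeries.coeff (p.2 + epsT tj)
                              (xD i v x (m - k - l)))) := by
      rw [Pi.add_apply, map_add, coeff_wmul_expand, coeff_wmul_expand]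
      simp only [← Finset.sum_add_distrib, ← mul_add]
    rw [hfun, hval]
    refine DDp.sum _ _ _ fun k _ => ?_
    refine DDp.sum _ _ _ fun l _ => ?_
    refine DDp.const_mul _ ?_
    refine DDp.sum _ _ _ fun ti _ => ?_
    refine DDp.sum _ _ _ fun tj _ => ?_
    refine DDp.const_mul _ ?_
    refine DDp.sum _ _ _ fun p _ => ?_
    exact (DDp.const_mul _ (DDp.coeff_sect hu _ _)).mul
      (DDp.const_mul _ (DDp.coeff_sect hv _ _))
  exact key.2

lemma wmulS_flat {u v : Sect n} (hu : Sect.Smooth u) (hv : Sect.Smooth v)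
    (hflu : Sect.Flat u) (hflv : Sect.Flat v) : Sect.Flat (wmulS u v) := by
  intro i x
  calc xD i (wmulS u v) x = wmul (xD i u x) (v x) + wmul (u x) (xD i v x) :=
        xD_wmulS hu hv i x
    _ = wmul (yDa i (u x)) (v x) + wmul (u x) (yDa i (v x)) := by rw [hflu i x, hflv i x]
    _ = yDa i (wmulS u v x) := (wmul_yDa i _ _).symm

lemma coeff0_iterD {u : Sect n} (hu : Sect.Smooth u) (hfl : Sect.Flat u) (m : ℕ)
    {k : ℕ} (t : Fin k → Fin (2 * n)) (x : Pt n) :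
    MvPowerSeries.coeff (0 : Fin (2*n) →₀ ℕ) (iterD yD t (u x m))
      = iterD xDf t (sigma u m) x := by
  have hsm : ContDiff ℝ (⊤:ℕ∞) (sigma u m) := hu m 0
  rw [iterD_yD_eq_yDM, coeff_yDM, zero_add, congrFun (flat_coeff hu hfl m (epsT t)) x,
    iterD_xDf_eq_xDfM t (sigma u m) hsm, Qf_zero_left, ← mul_assoc,
    mul_inv_cancel₀ (prod_fact_ne_zero _), one_mul]

lemma sigma_wmulS {u v : Sect n} (hu : Sect.Smooth u) (hv : Sect.Smooth v)
    (hflu : Sect.Flat u) (hflv : Sect.Flat v) :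
    sigma (wmulS u v) = fMul (stdPi n) (sigma u) (sigma v) := by
  funext m x
  show MvPowerSeries.coeff 0 (wmul (u x) (v x) m)
    = moyalN xDf (stdPi n) (sigma u) (sigma v) m x
  rw [coeff_wmul]
  rw [show moyalN xDf (stdPi n) (sigma u) (sigma v) m x
      = ∑ k ∈ Finset.range (m + 1), ∑ l ∈ Finset.range (m - k + 1),
          moyalTerm xDf (stdPi n) k (sigma u l) (sigma v (m - k - l)) x by
    rw [show moyalN xDf (stdPi n) (sigma u) (sigma v) m
        = ∑ k ∈ Finset.range (m + 1), ∑ l ∈ Finset.range (m - k + 1),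
            moyalTerm xDf (stdPi n) k (sigma u l) (sigma v (m - k - l)) from rfl,
      Finset.sum_apply]
    exact Finset.sum_congr rfl fun k _ => Finset.sum_apply _ _ _]
  refine Finset.sum_congr rfl fun k _ => Finset.sum_congr rfl fun l _ => ?_
  unfold moyalTerm
  rw [map_smul, smul_eq_mul, Pi.smul_apply, smul_eq_mul]
  congr 1
  rw [map_sum, Finset.sum_apply]
  refine Finset.sum_congr rfl fun ti _ => ?_
  rw [map_sum, Finset.sum_apply]
  refine Finset.sum_congr rfl fun tj _ => ?_
  rw [map_smul, smul_eq_mul, Pi.smul_apply, smul_eq_mul]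
  congr 1
  rw [Pi.mul_apply, coeff0_mul, coeff0_iterD hu hflu, coeff0_iterD hv hflv]

end Aux3

end
end StarPaper

namespace StarPaper

/-- For `D = −δ + d` on `W`-valued forms over `ℝ^{2n}`:
(i) every `a ∈ C^∞(ℝ^{2n},ℂ)[[ℏ]]` has a unique flat lift `ã` with `ã(x,0) = a(x)`,
namely the fiberwise Taylor series; (ii) the fiberwise Moyal–Weyl product of two flat
sections is flat and projects to the Moyal star-product of the projections.  Hence
`σ(u) = u|_{y=0}` identifies the algebra of flat sections with the Moyal star-product
algebra `C^∞(ℝ^{2n},ℂ)[[ℏ]]`. -/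
theorem flat_sections_moyal (n : ℕ) :
    (∀ F : SmSer (2 * n), SmSer.Smooth F →
      Sect.Smooth (taylorS F) ∧ Sect.Flat (taylorS F) ∧ sigma (taylorS F) = F ∧
      ∀ u : Sect n, Sect.Smooth u → Sect.Flat u → sigma u = F → u = taylorS F) ∧
    (∀ u v : Sect n, Sect.Smooth u → Sect.Smooth v → Sect.Flat u → Sect.Flat v →
      Sect.Flat (wmulS u v) ∧
      sigma (wmulS u v) = fMul (stdPi n) (sigma u) (sigma v)) := by
  constructor
  · intro F hF
    exact ⟨taylorS_smooth hF, taylorS_flat hF, taylorS_sigma F,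
      fun u hu hfl hσ => flat_unique hu hfl hσ⟩
  · intro u v hu hv hflu hflv
    exact ⟨wmulS_flat hu hv hflu hflv, sigma_wmulS hu hv hflu hflv⟩

end StarPaper
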